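/- Let G be a tree and ε > 0. Then for every symmetric positive definite matrix A with zeros according to G, the soft-thresholded matrix η_ε(A), defined by (η_ε(A))_{ij} = sgn(a_{ij})·max(|a_{ij}| − ε, 0) for i ≠ j and (η_ε(A))_{ii} = a_{ii}, is positive definite. -/

import Mathlib

/-- Soft-thresholding at level `ε` applied to off-diagonal entries. -/
noncomputable def softThreshold {n : ℕ} (ε : ℝ) (A : Matrix (Fin n) (Fin n) ℝ) :
    Matrix (Fin n) (Fin n) ℝ :=
  Matrix.of fun i j =>
    if i = j then A i i else Real.sign (A i j) * max (|A i j| - ε) 0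

/-- `-sign x`, defaulting to `1` at `0`. -/
noncomputable def esign (x : ℝ) : ℝ := if x = 0 then 1 else -Real.sign x

lemma esign_mul_self (x : ℝ) : esign x * esign x = 1 := by
  unfold esign
  rcases lt_trichotomy x 0 with h | h | h
  · rw [if_neg h.ne, Real.sign_of_neg h]; norm_num
  · rw [if_pos h]; norm_num
  · rw [if_neg h.ne', Real.sign_of_pos h]; norm_num

lemma esign_mul (x : ℝ) : esign x * x = -|x| := by
  unfold esign
  rcases lt_trichotomy x 0 with h | h | h
  · rw [if_neg h.ne, Real.sign_of_neg h, abs_of_neg h]; ring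
  · simp [h]
  · rw [if_neg h.ne', Real.sign_of_pos h, abs_of_pos h]; ring

/-- Product of `esign (A u v)` along the edges of a walk. -/
noncomputable def wprod {n : ℕ} {G : SimpleGraph (Fin n)} (A : Matrix (Fin n) (Fin n) ℝ) :
    {u v : Fin n} → G.Walk u v → ℝ
  | _, _, .nil => 1
  | u, _, .cons (v := x) _ p => esign (A u x) * wprod A p

lemma wprod_append {n : ℕ} {G : SimpleGraph (Fin n)} (A : Matrix (Fin n) (Fin n) ℝ)
    {u v w : Fin n} (p : G.Walk u v) (q : G.Walk v w) :
    wprod A (p.append q) = wprod A p * wprod A q := by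
  induction p with
  | nil => simp [wprod]
  | cons h p ih => simp [wprod, ih, mul_assoc]

lemma wprod_mul_self {n : ℕ} {G : SimpleGraph (Fin n)} (A : Matrix (Fin n) (Fin n) ℝ)
    {u v : Fin n} (p : G.Walk u v) : wprod A p * wprod A p = 1 := by
  induction p with
  | nil => simp [wprod]
  | cons h p ih =>
    show (esign _ * _) * (esign _ * _) = 1
    calc (esign _ * wprod A p) * (esign _ * wprod A p)
        = (esign _ * esign _) * (wprod A p * wprod A p) := by ring
      _ = 1 := by rw [esign_mul_self, ih, mul_one]

theorem stmt_5 (n : ℕ) (G : SimpleGraph (Fin n)) (hG : G.IsTree)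
    (ε : ℝ) (hε : 0 < ε)
    (A : Matrix (Fin n) (Fin n) ℝ) (hAs : A.IsSymm) (hA : A.PosDef)
    (hAG : ∀ i j, i ≠ j → ¬ G.Adj i j → A i j = 0) :
    (softThreshold ε A).PosDef := by
  have hAsymm : ∀ i j, A j i = A i j := fun i j => by
    conv_lhs => rw [← hAs]
    rfl
  -- the vertex set is nonempty since the graph is connected
  obtain ⟨r⟩ : Nonempty (Fin n) := hG.isConnected.nonempty
  -- unique paths
  have hup := hG.existsUnique_path
  -- the canonical path from the root
  let pa : ∀ i : Fin n, G.Walk r i := fun i => (hup r i).exists.choose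
  have hpa : ∀ i : Fin n, (pa i).IsPath := fun i => (hup r i).exists.choose_spec
  -- sign at each vertex
  let s : Fin n → ℝ := fun i => wprod A (pa i)
  have hss : ∀ i, s i * s i = 1 := fun i => wprod_mul_self A (pa i)
  -- the key property along edges
  have hedge : ∀ i j : Fin n, G.Adj i j → s j = esign (A i j) * s i := by
    intro i j hadj
    by_cases hj : j ∈ (pa i).support
    · -- j lies on the path to i; the path to i is (path to j) + edge (j,i)
      have hq : ((pa i).takeUntil j hj).IsPath := (hpa i).takeUntil hj
      have hd : ((pa i).dropUntil j hj).IsPath := (hpa i).dropUntil hj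
      have hqe : (pa i).takeUntil j hj = pa j :=
        (hup r j).unique hq (hpa j)
      have hsingle : (SimpleGraph.Walk.cons hadj.symm SimpleGraph.Walk.nil : G.Walk j i).IsPath := by
        simp [SimpleGraph.Walk.cons_isPath_iff, hadj.ne']
      have hde : (pa i).dropUntil j hj = SimpleGraph.Walk.cons hadj.symm SimpleGraph.Walk.nil :=
        ((hup j i).unique hd hsingle)
      have hsplit := (pa i).take_spec hj
      have : s i = s j * esign (A j i) := by
        calc s i = wprod A (pa i) := rfl
          _ = wprod A (((pa i).takeUntil j hj).append ((pa i).dropUntil j hj)) := by rw [hsplit]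
          _ = wprod A ((pa i).takeUntil j hj) * wprod A ((pa i).dropUntil j hj) :=
              wprod_append A _ _
          _ = s j * wprod A ((pa i).dropUntil j hj) := by rw [hqe]
          _ = s j * (esign (A j i) * 1) := by rw [hde]; rfl
          _ = s j * esign (A j i) := by ring
      rw [hAsymm i j] at this
      calc s j = s j * (esign (A i j) * esign (A i j)) := by rw [esign_mul_self, mul_one]
        _ = (s j * esign (A i j)) * esign (A i j) := by ring
        _ = s i * esign (A i j) := by rw [← this]
        _ = esign (A i j) * s i := by ring
    · -- j is not on the path to i; the path to j is (path to i) + edge (i,j)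
      have hcp : ((pa i).concat hadj).IsPath := by
        rw [← SimpleGraph.Walk.isPath_reverse_iff, SimpleGraph.Walk.reverse_concat]
        exact (hpa i).reverse.cons (by simpa using hj)
      have hce : (pa i).concat hadj = pa j := (hup r j).unique hcp (hpa j)
      calc s j = wprod A ((pa i).concat hadj) := by rw [hce]
        _ = wprod A (pa i) * wprod A (SimpleGraph.Walk.cons hadj SimpleGraph.Walk.nil) :=
            wprod_append A _ _
        _ = wprod A (pa i) * (esign (A i j) * 1) := rfl
        _ = esign (A i j) * s i := by ring
  -- combined sign property
  have hsA : ∀ i j : Fin n, i ≠ j → s i * s j * A i j = -|A i j| := by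
    intro i j hne
    by_cases hadj : G.Adj i j
    · rw [hedge i j hadj]
      calc s i * (esign (A i j) * s i) * A i j
          = (s i * s i) * (esign (A i j) * A i j) := by ring
        _ = -|A i j| := by rw [hss, esign_mul, one_mul]
    · rw [hAG i j hne hadj]; simp
  have hsne : ∀ i, s i ≠ 0 := by
    intro i h
    have := hss i
    rw [h, mul_zero] at this
    norm_num at this
  -- the entries of the soft-thresholded matrix are dominated in absolute value
  have hdom : ∀ i j : Fin n, i ≠ j → |softThreshold ε A i j| ≤ |A i j| := by
    intro i j hne
    simp only [softThreshold, Matrix.of_apply, if_neg hne]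
    rcases eq_or_ne (A i j) 0 with h | h
    · simp [h]
    · rw [abs_mul]
      have h1 : |Real.sign (A i j)| = 1 := by
        rcases lt_or_gt_of_ne h with hlt | hgt
        · rw [Real.sign_of_neg hlt]; norm_num
        · rw [Real.sign_of_pos hgt]; norm_num
      rw [h1, one_mul, abs_of_nonneg (le_max_right _ _)]
      exact max_le (by linarith [abs_nonneg (A i j)]) (abs_nonneg (A i j))
  rw [Matrix.posDef_iff_dotProduct_mulVec]
  constructor
  · -- Hermitian
    ext i j
    simp only [Matrix.conjTranspose_apply, star_trivial, softThreshold, Matrix.of_apply]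
    by_cases h : i = j
    · simp [h]
    · rw [if_neg (Ne.symm h), if_neg h, hAsymm i j]
  · intro x hx
    -- the comparison vector
    set y : Fin n → ℝ := fun i => s i * |x i| with hy
    have hyne : y ≠ 0 := by
      intro h
      apply hx
      funext i
      have := congrFun h i
      simp only [hy, Pi.zero_apply, mul_eq_zero] at this
      rcases this with h' | h'
      · exact absurd h' (hsne i)
      · simpa [abs_eq_zero] using h'
    have hApos := hA.dotProduct_mulVec_pos hyne
    simp only [star_trivial] at hApos ⊢
    refine lt_of_lt_of_le hApos ?_
    simp only [dotProduct, Matrix.mulVec, dotProduct, Finset.mul_sum]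
    apply Finset.sum_le_sum
    intro i _
    apply Finset.sum_le_sum
    intro j _
    by_cases hij : i = j
    · subst hij
      have : softThreshold ε A i i = A i i := by simp [softThreshold]
      rw [this]
      have : y i * (A i i * y i) = x i * (A i i * x i) := by
        have h1 : y i * y i = x i * x i := by
          calc y i * y i = (s i * s i) * (|x i| * |x i|) := by rw [hy]; ring
            _ = x i * x i := by rw [hss, one_mul, abs_mul_abs_self]
        calc y i * (A i i * y i) = A i i * (y i * y i) := by ring
          _ = A i i * (x i * x i) := by rw [h1]
          _ = x i * (A i i * x i) := by ring
      rw [this]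
    · -- off-diagonal
      have hL : y i * (A i j * y j) = -|A i j| * (|x i| * |x j|) := by
        calc y i * (A i j * y j) = (s i * s j * A i j) * (|x i| * |x j|) := by rw [hy]; ring
          _ = -|A i j| * (|x i| * |x j|) := by rw [hsA i j hij]
      rw [hL]
      have h2 : -(|x i| * (|softThreshold ε A i j| * |x j|)) ≤ x i * (softThreshold ε A i j * x j) := by
        have := neg_abs_le (x i * (softThreshold ε A i j * x j))
        calc -(|x i| * (|softThreshold ε A i j| * |x j|))
            = -|x i * (softThreshold ε A i j * x j)| := by rw [abs_mul, abs_mul]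
          _ ≤ _ := neg_abs_le _
      refine le_trans ?_ h2
      have h3 : |x i| * (|softThreshold ε A i j| * |x j|) ≤ |x i| * (|A i j| * |x j|) := by
        apply mul_le_mul_of_nonneg_left _ (abs_nonneg _)
        exact mul_le_mul_of_nonneg_right (hdom i j hij) (abs_nonneg _)
      nlinarith [abs_nonneg (x i), abs_nonneg (x j), abs_nonneg (A i j)]
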